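/- Let G be an n-vertex graph with adjacency eigenvalues λ₁ ≥ … ≥ λₙ, and let 0 < γ < q < 1. Suppose Σ_{λᵢ>0} λᵢ ≤ n^{1+γ} and that S_T² ≤ 4n·S_{T²/(2n)} for every T ≥ 2n^{1−q}. Then for every κ ∈ [0,1], Σ_{0 ≤ λᵢ ≤ κn} λᵢ² ≤ 50·κ^{1−γ/q}·n². -/

import Mathlib

open Finset
set_option maxHeartbeats 1000000

section Aux
variable {n : ℕ}

private lemma le_of_sq_le_sq' {a b : ℝ} (ha : 0 ≤ a) (hb : 0 ≤ b) (h : a^2 ≤ b^2) : a ≤ b := by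
  nlinarith

private lemma tr_sq_le (G : SimpleGraph (Fin n)) [DecidableRel G.Adj]
    (hA : (G.adjMatrix ℝ).IsHermitian) :
    ∑ i, hA.eigenvalues i ^ 2 ≤ (n : ℝ) ^ 2 := by
  classical
  set A : Matrix (Fin n) (Fin n) ℝ := G.adjMatrix ℝ with hAdef
  set U : Matrix (Fin n) (Fin n) ℝ := (hA.eigenvectorUnitary : Matrix (Fin n) (Fin n) ℝ) with hUdef
  have hU1 : U * star U = 1 := Matrix.mem_unitaryGroup_iff.mp hA.eigenvectorUnitary.2
  have hofreal : (RCLike.ofReal ∘ hA.eigenvalues : Fin n → ℝ) = hA.eigenvalues := by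
    funext i; simp
  have hdiag : star U * A * U = Matrix.diagonal hA.eigenvalues := by
    rw [← hofreal]; simpa using hA.conjStarAlgAut_star_eigenvectorUnitary
  have htr : ∑ i, hA.eigenvalues i ^ 2 = Matrix.trace (A * A) := by
    calc ∑ i, hA.eigenvalues i ^ 2
        = Matrix.trace (Matrix.diagonal hA.eigenvalues * Matrix.diagonal hA.eigenvalues) := by
          rw [Matrix.diagonal_mul_diagonal, Matrix.trace_diagonal]
          exact Finset.sum_congr rfl fun i _ => sq (hA.eigenvalues i)
      _ = Matrix.trace ((star U * A * U) * (star U * A * U)) := by rw [hdiag]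
      _ = Matrix.trace (star U * (A * (U * star U) * A) * U) := by
          congr 1; noncomm_ring
      _ = Matrix.trace (A * A) := by
          rw [hU1, Matrix.mul_one, Matrix.trace_mul_cycle, ← Matrix.mul_assoc,
            hU1, Matrix.one_mul]
  rw [htr]
  have h2 : Matrix.trace (A * A) = ∑ i, ∑ j, A i j * A j i := by
    simp [Matrix.trace, Matrix.mul_apply, Matrix.diag]
  rw [h2]
  have hle : ∀ i j : Fin n, A i j * A j i ≤ 1 := by
    intro i j
    simp only [hAdef, SimpleGraph.adjMatrix_apply]
    split_ifs <;> norm_num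
  calc ∑ i, ∑ j, A i j * A j i ≤ ∑ _i : Fin n, ∑ _j : Fin n, (1:ℝ) :=
        Finset.sum_le_sum fun i _ => Finset.sum_le_sum fun j _ => hle i j
    _ = (n:ℝ)^2 := by simp [sq]

end Aux

/-- Let `G` be an `n`-vertex graph with adjacency eigenvalues `eig i`, and `0 < γ < q < 1`.
If the positive eigenvalues sum to at most `n^(1+γ)` and the recursion
`S_T² ≤ 4n S_{T²/(2n)}` holds for all `T ≥ 2n^(1-q)`, then for every `κ ∈ [0,1]`,
`∑_{0 ≤ eig i ≤ κn} (eig i)² ≤ 50 κ^(1-γ/q) n²`. -/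
theorem second_moment_small_eigenvalues {n : ℕ} (G : SimpleGraph (Fin n))
    [DecidableRel G.Adj] (hA : (G.adjMatrix ℝ).IsHermitian)
    (γ q : ℝ) (hγ : 0 < γ) (hγq : γ < q) (hq : q < 1)
    (hpos : (∑ i ∈ Finset.univ.filter fun i => 0 < hA.eigenvalues i, hA.eigenvalues i)
      ≤ (n : ℝ) ^ (1 + γ))
    (hrec : ∀ T : ℝ, 2 * (n : ℝ) ^ (1 - q) ≤ T →
      (∑ i ∈ Finset.univ.filter fun i => T ≤ hA.eigenvalues i, hA.eigenvalues i) ^ 2 ≤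
        4 * n * ∑ i ∈ Finset.univ.filter fun i => T ^ 2 / (2 * n) ≤ hA.eigenvalues i,
          hA.eigenvalues i)
    (κ : ℝ) (hκ0 : 0 ≤ κ) (hκ1 : κ ≤ 1) :
    (∑ i ∈ Finset.univ.filter fun i =>
        0 ≤ hA.eigenvalues i ∧ hA.eigenvalues i ≤ κ * n, (hA.eigenvalues i) ^ 2)
      ≤ 50 * κ ^ (1 - γ / q) * (n : ℝ) ^ 2 := by
  classical
  rcases Nat.eq_zero_or_pos n with hn0 | hn1
  · subst hn0
    simp
  set N : ℝ := (n : ℝ) with hNdef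
  set g : Fin n → ℝ := hA.eigenvalues with hgdef
  set ε : ℝ := 1 - γ / q with hεdef
  have hq0 : (0:ℝ) < q := hγ.trans hγq
  have hγq1 : γ / q < 1 := (div_lt_one hq0).mpr hγq
  have hγq0 : 0 < γ / q := div_pos hγ hq0
  have hε0 : 0 < ε := by rw [hεdef]; linarith
  have hε1 : ε < 1 := by rw [hεdef]; linarith
  have hκε : 0 ≤ κ ^ ε := Real.rpow_nonneg hκ0 ε
  have hN1 : (1:ℝ) ≤ N := by rw [hNdef]; exact_mod_cast hn1
  have hNpos : (0:ℝ) < N := lt_of_lt_of_le one_pos hN1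
  have hqε : q * ε = q - γ := by rw [hεdef]; field_simp
  set f : ℝ → ℝ := fun T => ∑ i ∈ Finset.univ.filter (fun i => T ≤ g i), g i with hfdef
  have hrec' : ∀ T : ℝ, 2 * N ^ (1 - q) ≤ T → f T ^ 2 ≤ 4 * N * f (T^2 / (2*N)) :=
    fun T hT => hrec T hT
  have hf_nonneg : ∀ T : ℝ, 0 < T → 0 ≤ f T := by
    intro T hT
    apply Finset.sum_nonneg
    intro i hi
    have := (Finset.mem_filter.mp hi).2
    linarith
  have hf_le : ∀ T : ℝ, 0 < T → f T ≤ N ^ (1 + γ) := by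
    intro T hT
    refine le_trans (Finset.sum_le_sum_of_subset_of_nonneg ?_ ?_) hpos
    · intro i hi
      rcases Finset.mem_filter.mp hi with ⟨h1, h2⟩
      exact Finset.mem_filter.mpr ⟨h1, lt_of_lt_of_le hT h2⟩
    · intro i hi _
      exact le_of_lt (Finset.mem_filter.mp hi).2
  -- iterated cap
  have L1 : ∀ k : ℕ, ∀ T : ℝ, 2 * N * N ^ (-(2*q) * (1/2:ℝ)^k) ≤ T →
      f T ≤ (4*N) ^ (1 - (1/2:ℝ)^k) * N ^ ((1+γ) * (1/2:ℝ)^k) := by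
    intro k
    induction k with
    | zero =>
      intro T hT
      have hTpos : 0 < T :=
        lt_of_lt_of_le (by positivity) hT
      have := hf_le T hTpos
      simpa using this
    | succ k IH =>
      intro T hT
      have hd0 : (0:ℝ) < (1/2:ℝ)^k := by positivity
      have hd1 : (1/2:ℝ)^k ≤ 1 := by
        apply pow_le_one₀ <;> norm_num
      rw [show -(2*q) * (1/2:ℝ)^(k+1) = -q * (1/2:ℝ)^k by rw [pow_succ]; ring] at hT
      have hXpos : 0 < N ^ (-q * (1/2:ℝ)^k) := Real.rpow_pos_of_pos hNpos _
      have hcpos : 0 < 2 * N * N ^ (-q * (1/2:ℝ)^k) := by positivity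
      have hTpos : 0 < T := lt_of_lt_of_le hcpos hT
      have hT1q : 2 * N ^ (1 - q) ≤ T := by
        refine le_trans ?_ hT
        have h1 : N ^ (1-q) = N * N ^ (-q) := by
          rw [show (1:ℝ) - q = 1 + (-q) by ring, Real.rpow_add hNpos, Real.rpow_one]
        have h2 : N ^ (-q) ≤ N ^ (-q * (1/2:ℝ)^k) := by
          apply Real.rpow_le_rpow_of_exponent_le hN1
          nlinarith
        rw [h1]
        nlinarith
      have hrecT := hrec' T hT1q
      have harg : 2 * N * N ^ (-(2*q) * (1/2:ℝ)^k) ≤ T^2 / (2*N) := by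
        have hsq : (2 * N * N ^ (-q * (1/2:ℝ)^k))^2 ≤ T^2 :=
          pow_le_pow_left₀ (le_of_lt hcpos) hT 2
        have hXX : N ^ (-q * (1/2:ℝ)^k) * N ^ (-q * (1/2:ℝ)^k) = N ^ (-(2*q) * (1/2:ℝ)^k) := by
          rw [← Real.rpow_add hNpos]; ring_nf
        have heq : (2 * N * N ^ (-q * (1/2:ℝ)^k))^2 / (2*N) = 2 * N * N ^ (-(2*q) * (1/2:ℝ)^k) := by
          rw [← hXX]; field_simp
        calc 2 * N * N ^ (-(2*q) * (1/2:ℝ)^k) = (2 * N * N ^ (-q * (1/2:ℝ)^k))^2 / (2*N) := heq.symm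
          _ ≤ T^2 / (2*N) := by
              apply div_le_div_of_nonneg_right hsq ?_ |>.trans_eq rfl
              positivity
      have hIH := IH _ harg
      have hS0 : (0:ℝ) ≤ (4*N) ^ (1 - (1/2:ℝ)^(k+1)) * N ^ ((1+γ) * (1/2:ℝ)^(k+1)) := by positivity
      apply le_of_sq_le_sq' (hf_nonneg T hTpos) hS0
      have hSsq : ((4*N) ^ (1 - (1/2:ℝ)^(k+1)) * N ^ ((1+γ) * (1/2:ℝ)^(k+1)))^2
          = 4 * N * ((4*N) ^ (1 - (1/2:ℝ)^k) * N ^ ((1+γ) * (1/2:ℝ)^k)) := by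
        have h4N : (0:ℝ) < 4*N := by positivity
        rw [mul_pow, pow_two, pow_two, ← Real.rpow_add h4N, ← Real.rpow_add hNpos]
        rw [show (1 - (1/2:ℝ)^(k+1)) + (1 - (1/2:ℝ)^(k+1)) = 1 + (1 - (1/2:ℝ)^k) by rw [pow_succ]; ring]
        rw [show ((1+γ) * (1/2:ℝ)^(k+1)) + ((1+γ) * (1/2:ℝ)^(k+1)) = (1+γ) * (1/2:ℝ)^k by rw [pow_succ]; ring]
        rw [Real.rpow_add h4N, Real.rpow_one]
        ring
      rw [hSsq]
      calc f T ^ 2 ≤ 4 * N * f (T^2/(2*N)) := hrecT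
        _ ≤ 4 * N * ((4*N) ^ (1 - (1/2:ℝ)^k) * N ^ ((1+γ) * (1/2:ℝ)^k)) := by
            apply mul_le_mul_of_nonneg_left hIH (by positivity)
  set W : Finset (Fin n) := Finset.univ.filter (fun i => 0 ≤ g i ∧ g i ≤ κ * N) with hWdef
  show ∑ i ∈ W, g i ^ 2 ≤ 50 * κ ^ ε * N ^ 2
  have hsumW : ∀ s : Finset (Fin n), (∀ i ∈ s, 0 ≤ g i) → ∑ i ∈ s, g i ≤ N ^ (1+γ) := by
    intro s hs
    have h1 : ∑ i ∈ s, g i = ∑ i ∈ s.filter (fun i => 0 < g i), g i := by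
      rw [Finset.sum_filter_of_ne]
      intro x hx hgx
      exact lt_of_le_of_ne (hs x hx) (Ne.symm hgx)
    rw [h1]
    refine le_trans (Finset.sum_le_sum_of_subset_of_nonneg ?_ ?_) hpos
    · intro i hi
      exact Finset.mem_filter.mpr ⟨Finset.mem_univ i, (Finset.mem_filter.mp hi).2⟩
    · intro i hi _
      exact le_of_lt (Finset.mem_filter.mp hi).2
  by_cases hκsmall : κ < 2 * N ^ (-(2*q))
  · -- tiny κ: trivial bound via hpos
    have h1 : ∑ i ∈ W, g i ^ 2 ≤ κ * N * N ^ (1+γ) := by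
      calc ∑ i ∈ W, g i ^ 2 ≤ ∑ i ∈ W, κ * N * g i := by
            apply Finset.sum_le_sum
            intro i hi
            obtain ⟨-, h0, h1⟩ := Finset.mem_filter.mp hi
            rw [pow_two]
            exact mul_le_mul_of_nonneg_right h1 h0
        _ = κ * N * ∑ i ∈ W, g i := by rw [Finset.mul_sum]
        _ ≤ κ * N * N ^ (1+γ) := by
            apply mul_le_mul_of_nonneg_left
              (hsumW W (fun i hi => (Finset.mem_filter.mp hi).2.1)) (by positivity)
    refine h1.trans ?_
    have hsplit : κ ^ ε * κ ^ (1-ε) = κ := by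
      rw [← Real.rpow_add' hκ0 (by norm_num), show ε+(1-ε) = (1:ℝ) by ring, Real.rpow_one]
    have hexp : -(2*q)*(1-ε) = -(2*γ) := by linear_combination 2*hqε
    have h2 : κ ^ (1-ε) ≤ 2 * N ^ (-(2*γ)) := by
      calc κ ^ (1-ε) ≤ (2 * N ^ (-(2*q))) ^ (1-ε) :=
            Real.rpow_le_rpow hκ0 (le_of_lt hκsmall) (by linarith)
        _ = 2 ^ (1-ε) * (N ^ (-(2*q))) ^ (1-ε) := Real.mul_rpow (by norm_num) (by positivity)
        _ ≤ 2 * N ^ (-(2*γ)) := by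
            have ha : ((2:ℝ)) ^ (1-ε) ≤ 2 := by
              calc (2:ℝ) ^ (1-ε) ≤ (2:ℝ)^(1:ℝ) :=
                    Real.rpow_le_rpow_of_exponent_le one_le_two (by linarith)
                _ = 2 := Real.rpow_one 2
            have hb : (N ^ (-(2*q))) ^ (1-ε) = N ^ (-(2*γ)) := by
              rw [← Real.rpow_mul (le_of_lt hNpos), hexp]
            rw [hb]
            nlinarith [Real.rpow_pos_of_pos hNpos (-(2*γ)),
              Real.rpow_nonneg (le_of_lt hNpos) (-(2*γ))]
    have h3 : N ^ (-(2*γ)) * N ^ (1+γ) = N ^ (1-γ) := by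
      rw [← Real.rpow_add hNpos]; ring_nf
    have h4 : N ^ (1-γ) ≤ N := by
      calc N ^ (1-γ) ≤ N^(1:ℝ) := Real.rpow_le_rpow_of_exponent_le hN1 (by linarith)
        _ = N := Real.rpow_one N
    have h5 : 0 < N ^ (1+γ) := Real.rpow_pos_of_pos hNpos _
    calc κ * N * N ^ (1+γ) = κ^ε * κ^(1-ε) * N * N^(1+γ) := by rw [hsplit]
      _ ≤ κ^ε * (2 * N ^ (-(2*γ))) * N * N^(1+γ) := by
          exact mul_le_mul_of_nonneg_right
            (mul_le_mul_of_nonneg_right (mul_le_mul_of_nonneg_left h2 hκε) (le_of_lt hNpos))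
            (le_of_lt h5)
      _ = 2 * κ^ε * (N * (N ^ (-(2*γ)) * N^(1+γ))) := by ring
      _ = 2 * κ^ε * (N * N^(1-γ)) := by rw [h3]
      _ ≤ 2 * κ^ε * (N * N) := by
          have h6 : 0 ≤ 2 * κ^ε := by positivity
          nlinarith [mul_le_mul_of_nonneg_left h4 (le_of_lt hNpos), h6]
      _ ≤ 50 * κ ^ ε * N ^ 2 := by
          rw [pow_two]
          nlinarith [hκε, hNpos, mul_nonneg hκε (le_of_lt (mul_pos hNpos hNpos))]
  push_neg at hκsmall
  have hκpos : 0 < κ := lt_of_lt_of_le (by positivity) hκsmall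
  have hhalf : (κ/2)^ε ≤ κ^ε :=
    Real.rpow_le_rpow (by linarith) (by linarith) (le_of_lt hε0)
  have hN2 : (0:ℝ) ≤ N^2 := by positivity
  by_cases hB : (1/4:ℝ) < (κ/2)^ε
  · -- big κ: trace bound
    have htr : ∑ i, g i ^2 ≤ N ^ 2 := tr_sq_le G hA
    have hQall : ∑ i ∈ W, g i^2 ≤ ∑ i, g i^2 :=
      Finset.sum_le_sum_of_subset_of_nonneg (Finset.filter_subset _ _) (fun i _ _ => sq_nonneg _)
    have h1 : N^2 ≤ 4*((κ/2)^ε)*N^2 := by nlinarith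
    have h2 : 4*((κ/2)^ε)*N^2 ≤ 4*(κ^ε)*N^2 := by nlinarith
    nlinarith [hκε]
  push_neg at hB
  have hν : N ^ (-(2*q)) ≤ κ/2 := by linarith
  have hκ2pos : (0:ℝ) < κ/2 := by linarith
  -- find the largest K with N^(-(2q)(1/2)^K) ≤ κ/2
  have hbprop : ∀ k : ℕ, Nat.floor (4*q*Real.log N) + 1 ≤ k →
      κ/2 < N ^ (-(2*q) * (1/2:ℝ)^k) := by
    intro k hk
    have hlogN : 0 ≤ Real.log N := Real.log_nonneg hN1
    have h1 : 4*q*Real.log N < ((Nat.floor (4*q*Real.log N) + 1 : ℕ) : ℝ) := by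
      push_cast
      exact Nat.lt_floor_add_one _
    have h2 : ((Nat.floor (4*q*Real.log N) + 1 : ℕ) : ℝ) ≤ (k:ℝ) := by exact_mod_cast hk
    have h3 : (k:ℝ) < (2:ℝ)^k := by exact_mod_cast Nat.lt_two_pow_self (n := k)
    have h2k : 4*q*Real.log N < (2:ℝ)^k := by linarith
    have hpk : (0:ℝ) < (1/2:ℝ)^k := by positivity
    have hp21 : (1/2:ℝ)^k * (2:ℝ)^k = 1 := by rw [← mul_pow]; norm_num
    have h5 : 4*q*Real.log N * (1/2:ℝ)^k < 1 := by
      have h6 := mul_lt_mul_of_pos_right h2k hpk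
      nlinarith [h6, hp21]
    have hx := Real.add_one_le_exp (Real.log N * (-(2*q)*(1/2:ℝ)^k))
    have hrpow : N ^ (-(2*q)*(1/2:ℝ)^k) = Real.exp (Real.log N * (-(2*q)*(1/2:ℝ)^k)) :=
      Real.rpow_def_of_pos hNpos _
    have h7 : κ/2 < 1 + Real.log N * (-(2*q)*(1/2:ℝ)^k) := by nlinarith [h5]
    rw [hrpow]
    linarith [hx, h7]
  have hexK : ∃ K : ℕ, (N ^ (-(2*q) * (1/2:ℝ)^K) ≤ κ/2) ∧
      κ/2 < N ^ (-(2*q) * (1/2:ℝ)^(K+1)) := by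
    set b : ℕ := Nat.floor (4*q*Real.log N) + 1 with hbdef
    have hP0 : N ^ (-(2*q) * (1/2:ℝ)^(0:ℕ)) ≤ κ/2 := by
      simpa using hν
    refine ⟨Nat.findGreatest (fun k => N ^ (-(2*q) * (1/2:ℝ)^k) ≤ κ/2) b, ?_, ?_⟩
    · exact Nat.findGreatest_spec (P := fun k => N ^ (-(2*q) * (1/2:ℝ)^k) ≤ κ/2) (Nat.zero_le b) hP0
    · have hKb : Nat.findGreatest (fun k => N ^ (-(2*q) * (1/2:ℝ)^k) ≤ κ/2) b ≤ b :=
        Nat.findGreatest_le b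
      have hKltb : Nat.findGreatest (fun k => N ^ (-(2*q) * (1/2:ℝ)^k) ≤ κ/2) b < b := by
        rcases lt_or_eq_of_le hKb with h | h
        · exact h
        · exfalso
          have h1 := Nat.findGreatest_spec (P := fun k => N ^ (-(2*q) * (1/2:ℝ)^k) ≤ κ/2) (Nat.zero_le b) hP0
          rw [h] at h1
          exact absurd h1 (not_le.mpr (hbprop b le_rfl))
      have hng := Nat.findGreatest_is_greatest (Nat.lt_succ_self
        (Nat.findGreatest (fun k => N ^ (-(2*q) * (1/2:ℝ)^k) ≤ κ/2) b)) (Nat.succ_le_of_lt hKltb)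
      exact not_le.mp hng
  obtain ⟨K, hPK, hnotPK⟩ := hexK
  -- auxiliary: (4N)^(1-d) ≤ 4 N^(1-d)
  have h4Nle : ∀ d : ℝ, 0 ≤ d → d ≤ 1 → (4*N) ^ (1-d) ≤ 4 * N ^ (1-d) := by
    intro d hd0 hd1
    rw [Real.mul_rpow (by norm_num) (le_of_lt hNpos)]
    have h1 : (4:ℝ)^(1-d) ≤ 4 := by
      calc (4:ℝ)^(1-d) ≤ (4:ℝ)^(1:ℝ) :=
            Real.rpow_le_rpow_of_exponent_le (by norm_num) (by linarith)
        _ = 4 := Real.rpow_one 4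
    exact mul_le_mul_of_nonneg_right h1 (Real.rpow_nonneg (le_of_lt hNpos) (1-d))
  have hE_mono : ∀ m : ℕ, 2*N*N^(-(2*q)*(1/2:ℝ)^m) ≤ 2*N*N^(-(2*q)*(1/2:ℝ)^(m+1)) := by
    intro m
    have h1 : (1/2:ℝ)^(m+1) ≤ (1/2:ℝ)^m :=
      pow_le_pow_of_le_one (by norm_num) (by norm_num) (Nat.le_succ m)
    have h2 : -(2*q)*(1/2:ℝ)^m ≤ -(2*q)*(1/2:ℝ)^(m+1) := by nlinarith
    have h3 := Real.rpow_le_rpow_of_exponent_le hN1 h2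
    exact mul_le_mul_of_nonneg_left h3 (by positivity)
  have hEpos : ∀ m : ℕ, (0:ℝ) < 2*N*N^(-(2*q)*(1/2:ℝ)^m) := fun m => by positivity
  -- band bound
  have hband : ∀ m : ℕ,
      ∑ i ∈ (W.filter (fun i => g i < 2*N*N^(-(2*q)*(1/2:ℝ)^(m+1)))).filter
        (fun i => ¬ g i < 2*N*N^(-(2*q)*(1/2:ℝ)^m)), g i ^2
      ≤ 8*N^2*N^((γ-q)*(1/2:ℝ)^m) := by
    intro m
    have hd0 : (0:ℝ) < (1/2:ℝ)^m := by positivity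
    have hd1 : (1/2:ℝ)^m ≤ 1 := pow_le_one₀ (by norm_num) (by norm_num)
    have step1 : ∑ i ∈ (W.filter (fun i => g i < 2*N*N^(-(2*q)*(1/2:ℝ)^(m+1)))).filter
        (fun i => ¬ g i < 2*N*N^(-(2*q)*(1/2:ℝ)^m)), g i ^2
        ≤ (2*N*N^(-(2*q)*(1/2:ℝ)^(m+1))) * f (2*N*N^(-(2*q)*(1/2:ℝ)^m)) := by
      calc ∑ i ∈ (W.filter (fun i => g i < 2*N*N^(-(2*q)*(1/2:ℝ)^(m+1)))).filter
            (fun i => ¬ g i < 2*N*N^(-(2*q)*(1/2:ℝ)^m)), g i ^2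
          ≤ ∑ i ∈ (W.filter (fun i => g i < 2*N*N^(-(2*q)*(1/2:ℝ)^(m+1)))).filter
            (fun i => ¬ g i < 2*N*N^(-(2*q)*(1/2:ℝ)^m)), (2*N*N^(-(2*q)*(1/2:ℝ)^(m+1))) * g i := by
            apply Finset.sum_le_sum
            intro i hi
            obtain ⟨hi1, hi2⟩ := Finset.mem_filter.mp hi
            obtain ⟨hiW, hlt⟩ := Finset.mem_filter.mp hi1
            have h0 : 0 ≤ g i := (Finset.mem_filter.mp hiW).2.1
            rw [pow_two]
            exact mul_le_mul_of_nonneg_right (le_of_lt hlt) h0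
        _ = (2*N*N^(-(2*q)*(1/2:ℝ)^(m+1))) * ∑ i ∈ (W.filter (fun i => g i < 2*N*N^(-(2*q)*(1/2:ℝ)^(m+1)))).filter
            (fun i => ¬ g i < 2*N*N^(-(2*q)*(1/2:ℝ)^m)), g i := by rw [Finset.mul_sum]
        _ ≤ (2*N*N^(-(2*q)*(1/2:ℝ)^(m+1))) * f (2*N*N^(-(2*q)*(1/2:ℝ)^m)) := by
            apply mul_le_mul_of_nonneg_left ?_ (le_of_lt (hEpos (m+1)))
            apply Finset.sum_le_sum_of_subset_of_nonneg
            · intro i hi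
              obtain ⟨hi1, hi2⟩ := Finset.mem_filter.mp hi
              exact Finset.mem_filter.mpr ⟨Finset.mem_univ i, not_lt.mp hi2⟩
            · intro i hi _
              exact le_trans (le_of_lt (hEpos m)) (Finset.mem_filter.mp hi).2
    have step2 := L1 m (2*N*N^(-(2*q)*(1/2:ℝ)^m)) le_rfl
    have step3 : (2*N*N^(-(2*q)*(1/2:ℝ)^(m+1))) * ((4*N)^(1-(1/2:ℝ)^m) * N^((1+γ)*(1/2:ℝ)^m))
        ≤ 8*N^2*N^((γ-q)*(1/2:ℝ)^m) := by
      have hEm1 : 2*N*N^(-(2*q)*(1/2:ℝ)^(m+1)) = 2*N*N^(-q*(1/2:ℝ)^m) := by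
        rw [show -(2*q)*(1/2:ℝ)^(m+1) = -q*(1/2:ℝ)^m by rw [pow_succ]; ring]
      have h4 : (4*N)^(1-(1/2:ℝ)^m) ≤ 4*N^(1-(1/2:ℝ)^m) := h4Nle _ (le_of_lt hd0) hd1
      have hfuse : N^(-q*(1/2:ℝ)^m) * (N^(1-(1/2:ℝ)^m) * N^((1+γ)*(1/2:ℝ)^m))
          = N * N^((γ-q)*(1/2:ℝ)^m) := by
        rw [← Real.rpow_add hNpos, ← Real.rpow_add hNpos,
          show -q*(1/2:ℝ)^m + ((1-(1/2:ℝ)^m) + (1+γ)*(1/2:ℝ)^m) = 1 + (γ-q)*(1/2:ℝ)^m by ring,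
          Real.rpow_add hNpos, Real.rpow_one]
      have hXm : (0:ℝ) < N^(-q*(1/2:ℝ)^m) := Real.rpow_pos_of_pos hNpos _
      calc (2*N*N^(-(2*q)*(1/2:ℝ)^(m+1))) * ((4*N)^(1-(1/2:ℝ)^m) * N^((1+γ)*(1/2:ℝ)^m))
          = (2*N*N^(-q*(1/2:ℝ)^m)) * ((4*N)^(1-(1/2:ℝ)^m) * N^((1+γ)*(1/2:ℝ)^m)) := by
            rw [hEm1]
        _ ≤ (2*N*N^(-q*(1/2:ℝ)^m)) * ((4*N^(1-(1/2:ℝ)^m)) * N^((1+γ)*(1/2:ℝ)^m)) := by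
            apply mul_le_mul_of_nonneg_left ?_ (by positivity)
            apply mul_le_mul_of_nonneg_right h4 (by positivity)
        _ = 8*N*(N^(-q*(1/2:ℝ)^m) * (N^(1-(1/2:ℝ)^m) * N^((1+γ)*(1/2:ℝ)^m))) := by ring
        _ = 8*N*(N * N^((γ-q)*(1/2:ℝ)^m)) := by rw [hfuse]
        _ = 8*N^2*N^((γ-q)*(1/2:ℝ)^m) := by rw [pow_two]; ring
    have hfE : f (2*N*N^(-(2*q)*(1/2:ℝ)^m)) ≤ (4*N)^(1-(1/2:ℝ)^m) * N^((1+γ)*(1/2:ℝ)^m) := step2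
    calc ∑ i ∈ (W.filter (fun i => g i < 2*N*N^(-(2*q)*(1/2:ℝ)^(m+1)))).filter
          (fun i => ¬ g i < 2*N*N^(-(2*q)*(1/2:ℝ)^m)), g i ^2
        ≤ (2*N*N^(-(2*q)*(1/2:ℝ)^(m+1))) * f (2*N*N^(-(2*q)*(1/2:ℝ)^m)) := step1
      _ ≤ (2*N*N^(-(2*q)*(1/2:ℝ)^(m+1))) * ((4*N)^(1-(1/2:ℝ)^m) * N^((1+γ)*(1/2:ℝ)^m)) :=
          mul_le_mul_of_nonneg_left hfE (le_of_lt (hEpos (m+1)))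
      _ ≤ 8*N^2*N^((γ-q)*(1/2:ℝ)^m) := step3
  -- cumulative bound by induction
  have hMain : ∀ m : ℕ,
      ∑ i ∈ W.filter (fun i => g i < 2*N*N^(-(2*q)*(1/2:ℝ)^m)), g i ^2
      ≤ 2*N*N^(-(2*q))*N^(1+γ) + ∑ j ∈ Finset.range m, 8*N^2*N^((γ-q)*(1/2:ℝ)^j) := by
    intro m
    induction m with
    | zero =>
      rw [show (2*N*N^(-(2*q)*(1/2:ℝ)^(0:ℕ))) = 2*N*N^(-(2*q)) by norm_num]
      simp only [Finset.range_zero, Finset.sum_empty, add_zero]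
      have hE0pos : (0:ℝ) < 2*N*N^(-(2*q)) := by positivity
      calc ∑ i ∈ W.filter (fun i => g i < 2*N*N^(-(2*q))), g i^2
          ≤ ∑ i ∈ W.filter (fun i => g i < 2*N*N^(-(2*q))), (2*N*N^(-(2*q))) * g i := by
            apply Finset.sum_le_sum
            intro i hi
            obtain ⟨hiW, hlt⟩ := Finset.mem_filter.mp hi
            have h0 : 0 ≤ g i := (Finset.mem_filter.mp hiW).2.1
            rw [pow_two]
            exact mul_le_mul_of_nonneg_right (le_of_lt hlt) h0
        _ = (2*N*N^(-(2*q))) * ∑ i ∈ W.filter (fun i => g i < 2*N*N^(-(2*q))), g i := by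
            rw [Finset.mul_sum]
        _ ≤ (2*N*N^(-(2*q))) * N^(1+γ) := by
            apply mul_le_mul_of_nonneg_left ?_ (le_of_lt hE0pos)
            apply hsumW
            intro i hi
            exact (Finset.mem_filter.mp (Finset.mem_filter.mp hi).1).2.1
        _ = 2*N*N^(-(2*q))*N^(1+γ) := by ring
    | succ m IH =>
      have hsplit := Finset.sum_filter_add_sum_filter_not
        (W.filter (fun i => g i < 2*N*N^(-(2*q)*(1/2:ℝ)^(m+1))))
        (fun i => g i < 2*N*N^(-(2*q)*(1/2:ℝ)^m)) (fun i => g i^2)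
      have hff : (W.filter (fun i => g i < 2*N*N^(-(2*q)*(1/2:ℝ)^(m+1)))).filter
          (fun i => g i < 2*N*N^(-(2*q)*(1/2:ℝ)^m))
          = W.filter (fun i => g i < 2*N*N^(-(2*q)*(1/2:ℝ)^m)) := by
        ext i
        simp only [Finset.mem_filter]
        constructor
        · rintro ⟨⟨hiW, -⟩, h2⟩; exact ⟨hiW, h2⟩
        · rintro ⟨hiW, h2⟩; exact ⟨⟨hiW, lt_of_lt_of_le h2 (hE_mono m)⟩, h2⟩
      rw [hff] at hsplit
      rw [← hsplit, Finset.sum_range_succ]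
      linarith [IH, hband m]
  -- τ facts
  set τ : ℝ := N ^ ((γ-q)*(1/2:ℝ)^K) with hτdef
  have hτ0 : (0:ℝ) < τ := Real.rpow_pos_of_pos hNpos _
  have hτle : τ ≤ (κ/2)^(ε/2) := by
    have h1 : τ = (N ^ (-(2*q)*(1/2:ℝ)^K)) ^ (ε/2) := by
      rw [hτdef, ← Real.rpow_mul (le_of_lt hNpos)]
      congr 1
      linear_combination ((1/2:ℝ)^K) * hqε
    rw [h1]
    exact Real.rpow_le_rpow (by positivity) hPK (by positivity)
  have hτhalf : τ ≤ 1/2 := by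
    have h2 : (κ/2)^(ε/2) = ((κ/2)^ε)^(1/2:ℝ) := by
      rw [show ε/2 = ε*(1/2:ℝ) by ring, Real.rpow_mul (le_of_lt hκ2pos)]
    have h3 : ((κ/2)^ε)^(1/2:ℝ) ≤ ((1/4:ℝ))^(1/2:ℝ) :=
      Real.rpow_le_rpow (Real.rpow_nonneg (le_of_lt hκ2pos) ε) hB (by norm_num)
    have h4 : ((1/4:ℝ))^(1/2:ℝ) = 1/2 := by
      rw [show (1/4:ℝ) = ((1/2:ℝ))^(2:ℕ) by norm_num, ← Real.rpow_natCast ((1/2:ℝ)) 2,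
        ← Real.rpow_mul (by norm_num)]
      norm_num
    calc τ ≤ (κ/2)^(ε/2) := hτle
      _ = ((κ/2)^ε)^(1/2:ℝ) := h2
      _ ≤ ((1/4:ℝ))^(1/2:ℝ) := h3
      _ = 1/2 := h4
  have hτsq : τ^2 ≤ (κ/2)^ε := by
    have h5 : ((κ/2)^(ε/2))^2 = (κ/2)^ε := by
      rw [pow_two, ← Real.rpow_add hκ2pos]
      ring_nf
    calc τ^2 ≤ ((κ/2)^(ε/2))^2 := pow_le_pow_left₀ (le_of_lt hτ0) hτle 2
      _ = (κ/2)^ε := h5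
  -- sum of band bounds
  have hterm : ∀ j ∈ Finset.range K, N^((γ-q)*(1/2:ℝ)^j) ≤ τ^(K - j + 1) := by
    intro j hj
    have hjK : j < K := Finset.mem_range.mp hj
    have heq : N^((γ-q)*(1/2:ℝ)^j) = τ^(2^(K-j)) := by
      rw [hτdef, ← Real.rpow_natCast (N ^ ((γ-q)*(1/2:ℝ)^K)) (2^(K-j)),
        ← Real.rpow_mul (le_of_lt hNpos)]
      congr 1
      push_cast
      have h21 : ((1/2:ℝ))^(K-j) * (2:ℝ)^(K-j) = 1 := by rw [← mul_pow]; norm_num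
      have hKj : (1/2:ℝ)^K = (1/2:ℝ)^j * (1/2:ℝ)^(K-j) := by
        rw [← pow_add]
        congr 1
        omega
      calc (γ-q)*(1/2:ℝ)^j = (γ-q)*(1/2:ℝ)^j * ((1/2:ℝ)^(K-j) * (2:ℝ)^(K-j)) := by
            rw [h21]; ring
        _ = (γ-q)*(1/2:ℝ)^K * (2:ℝ)^(K-j) := by rw [hKj]; ring
    rw [heq]
    apply pow_le_pow_of_le_one (le_of_lt hτ0) (by linarith)
    have := Nat.lt_two_pow_self (n := K-j)
    omega
  have hbandsum : ∑ j ∈ Finset.range K, 8*N^2*N^((γ-q)*(1/2:ℝ)^j) ≤ 16*N^2*((κ/2)^ε) := by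
    have h1 : ∑ j ∈ Finset.range K, 8*N^2*N^((γ-q)*(1/2:ℝ)^j)
        ≤ ∑ j ∈ Finset.range K, 8*N^2*τ^(K-j+1) := by
      apply Finset.sum_le_sum
      intro j hj
      exact mul_le_mul_of_nonneg_left (hterm j hj) (by positivity)
    have h2 : ∑ j ∈ Finset.range K, 8*N^2*τ^(K-j+1) = 8*N^2 * ∑ j ∈ Finset.range K, τ^(K-j+1) := by
      rw [Finset.mul_sum]
    have h3 : ∑ j ∈ Finset.range K, τ^(K-j+1) = ∑ i ∈ Finset.range K, τ^(i+2) := by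
      rw [← Finset.sum_range_reflect (fun i => τ^(i+2)) K]
      apply Finset.sum_congr rfl
      intro j hj
      have := Finset.mem_range.mp hj
      congr 1
      omega
    have h4 : ∑ i ∈ Finset.range K, τ^(i+2) = τ^2 * ∑ i ∈ Finset.range K, τ^i := by
      rw [Finset.mul_sum]
      apply Finset.sum_congr rfl
      intro i _
      rw [← pow_add]
      ring_nf
    have h5 : ∑ i ∈ Finset.range K, τ^i ≤ 2 := by
      calc ∑ i ∈ Finset.range K, τ^i ≤ ∑ i ∈ Finset.range K, (1/(2:ℝ))^i := by
            apply Finset.sum_le_sum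
            intro i _
            apply pow_le_pow_left₀ (le_of_lt hτ0) ?_ i
            linarith
        _ ≤ 2 := sum_geometric_two_le K
    have h6 : (0:ℝ) ≤ τ^2 := by positivity
    have h7 : τ^2 * ∑ i ∈ Finset.range K, τ^i ≤ τ^2 * 2 := mul_le_mul_of_nonneg_left h5 h6
    calc ∑ j ∈ Finset.range K, 8*N^2*N^((γ-q)*(1/2:ℝ)^j)
        ≤ 8*N^2 * ∑ j ∈ Finset.range K, τ^(K-j+1) := by rw [← h2]; exact h1
      _ = 8*N^2 * (τ^2 * ∑ i ∈ Finset.range K, τ^i) := by rw [h3, h4]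
      _ ≤ 8*N^2 * (τ^2 * 2) := by
          apply mul_le_mul_of_nonneg_left h7 (by positivity)
      _ = 16*N^2*τ^2 := by ring
      _ ≤ 16*N^2*((κ/2)^ε) := mul_le_mul_of_nonneg_left hτsq (by positivity)
  -- top band
  have htopset : ∑ i ∈ W.filter (fun i => ¬ g i < 2*N*N^(-(2*q)*(1/2:ℝ)^K)), g i^2
      ≤ κ*N*((4*N)^(1-(1/2:ℝ)^K) * N^((1+γ)*(1/2:ℝ)^K)) := by
    have hfEK := L1 K (2*N*N^(-(2*q)*(1/2:ℝ)^K)) le_rfl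
    have hκN0 : (0:ℝ) ≤ κ*N := by positivity
    have h1 : ∑ i ∈ W.filter (fun i => ¬ g i < 2*N*N^(-(2*q)*(1/2:ℝ)^K)), g i^2
        ≤ κ*N*f (2*N*N^(-(2*q)*(1/2:ℝ)^K)) := by
      calc ∑ i ∈ W.filter (fun i => ¬ g i < 2*N*N^(-(2*q)*(1/2:ℝ)^K)), g i^2
          ≤ ∑ i ∈ W.filter (fun i => ¬ g i < 2*N*N^(-(2*q)*(1/2:ℝ)^K)), κ*N*g i := by
            apply Finset.sum_le_sum
            intro i hi
            obtain ⟨hiW, -⟩ := Finset.mem_filter.mp hi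
            obtain ⟨-, h0, hle⟩ := Finset.mem_filter.mp hiW
            rw [pow_two]
            exact mul_le_mul_of_nonneg_right hle h0
        _ = κ*N * ∑ i ∈ W.filter (fun i => ¬ g i < 2*N*N^(-(2*q)*(1/2:ℝ)^K)), g i := by
            rw [Finset.mul_sum]
        _ ≤ κ*N*f (2*N*N^(-(2*q)*(1/2:ℝ)^K)) := by
            apply mul_le_mul_of_nonneg_left ?_ hκN0
            apply Finset.sum_le_sum_of_subset_of_nonneg
            · intro i hi
              obtain ⟨-, h2⟩ := Finset.mem_filter.mp hi
              exact Finset.mem_filter.mpr ⟨Finset.mem_univ i, not_lt.mp h2⟩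
            · intro i hi _
              exact le_trans (le_of_lt (hEpos K)) (Finset.mem_filter.mp hi).2
    exact h1.trans (mul_le_mul_of_nonneg_left hfEK hκN0)
  have htopnum : κ*N*((4*N)^(1-(1/2:ℝ)^K) * N^((1+γ)*(1/2:ℝ)^K)) ≤ 8*(κ^ε)*N^2 := by
    have hdK0 : (0:ℝ) < (1/2:ℝ)^K := by positivity
    have hdK1 : (1/2:ℝ)^K ≤ 1 := pow_le_one₀ (by norm_num) (by norm_num)
    have h4 := h4Nle ((1/2:ℝ)^K) (le_of_lt hdK0) hdK1
    have hfuse : N^(1-(1/2:ℝ)^K) * N^((1+γ)*(1/2:ℝ)^K) = N * N^(γ*(1/2:ℝ)^K) := by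
      rw [← Real.rpow_add hNpos,
        show (1-(1/2:ℝ)^K) + (1+γ)*(1/2:ℝ)^K = 1 + γ*(1/2:ℝ)^K by ring,
        Real.rpow_add hNpos, Real.rpow_one]
    have hXpos : (0:ℝ) < N^(q*(1/2:ℝ)^K) := Real.rpow_pos_of_pos hNpos _
    rw [show -(2*q)*(1/2:ℝ)^(K+1) = -(q*(1/2:ℝ)^K) by rw [pow_succ]; ring] at hnotPK
    rw [Real.rpow_neg (le_of_lt hNpos)] at hnotPK
    have hXlt : N^(q*(1/2:ℝ)^K) < 2/κ := by
      rw [lt_div_iff₀ hκpos]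
      have h1 := mul_lt_mul_of_pos_left hnotPK hXpos
      rw [mul_inv_cancel₀ (ne_of_gt hXpos)] at h1
      linarith
    have hgd : N^(γ*(1/2:ℝ)^K) ≤ (2/κ)^(γ/q) := by
      have h1 : N^(γ*(1/2:ℝ)^K) = (N^(q*(1/2:ℝ)^K))^(γ/q) := by
        rw [← Real.rpow_mul (le_of_lt hNpos)]
        congr 1
        field_simp
      rw [h1]
      exact Real.rpow_le_rpow (le_of_lt hXpos) (le_of_lt hXlt) (le_of_lt hγq0)
    have hdivrpow : (2/κ)^(γ/q) = 2^(1-ε)/κ^(1-ε) := by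
      rw [show γ/q = 1-ε by rw [hεdef]; ring, Real.div_rpow (by norm_num) hκ0]
    have h2e : (2:ℝ)^(1-ε) ≤ 2 := by
      calc (2:ℝ)^(1-ε) ≤ (2:ℝ)^(1:ℝ) :=
            Real.rpow_le_rpow_of_exponent_le one_le_two (by linarith)
        _ = 2 := Real.rpow_one 2
    have hsplit2 : κ^ε*κ^(1-ε) = κ := by
      rw [← Real.rpow_add' hκ0 (by norm_num), show ε+(1-ε) = (1:ℝ) by ring, Real.rpow_one]
    have hκpow_pos : (0:ℝ) < κ^(1-ε) := Real.rpow_pos_of_pos hκpos _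
    have hratio : κ/κ^(1-ε) = κ^ε := by
      rw [eq_comm, eq_div_iff (ne_of_gt hκpow_pos)]
      exact hsplit2
    have h2e0 : (0:ℝ) < (2:ℝ)^(1-ε) := by positivity
    calc κ*N*((4*N)^(1-(1/2:ℝ)^K) * N^((1+γ)*(1/2:ℝ)^K))
        ≤ κ*N*((4*N^(1-(1/2:ℝ)^K)) * N^((1+γ)*(1/2:ℝ)^K)) := by
          apply mul_le_mul_of_nonneg_left ?_ (by positivity)
          apply mul_le_mul_of_nonneg_right h4 (by positivity)
      _ = 4*κ*N*(N^(1-(1/2:ℝ)^K) * N^((1+γ)*(1/2:ℝ)^K)) := by ring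
      _ = 4*κ*N*(N * N^(γ*(1/2:ℝ)^K)) := by rw [hfuse]
      _ ≤ 4*κ*N*(N * (2^(1-ε)/κ^(1-ε))) := by
          apply mul_le_mul_of_nonneg_left ?_ (by positivity)
          exact mul_le_mul_of_nonneg_left (hgd.trans (le_of_eq hdivrpow)) (le_of_lt hNpos)
      _ = 4*(2:ℝ)^(1-ε)*(κ/κ^(1-ε))*N^2 := by rw [pow_two]; field_simp
      _ = 4*(2:ℝ)^(1-ε)*(κ^ε)*N^2 := by rw [hratio]
      _ = ((2:ℝ)^(1-ε))*(4*(κ^ε*N^2)) := by ring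
      _ ≤ 2*(4*(κ^ε*N^2)) := mul_le_mul_of_nonneg_right h2e (by positivity)
      _ = 8*(κ^ε)*N^2 := by ring
  -- tail
  have htail2 : 2*N*N^(-(2*q))*N^(1+γ) ≤ 2*((κ/2)^ε)*N^2 := by
    have h1 : N^(-(2*q))*N^(1+γ) = N^(1+γ-2*q) := by
      rw [← Real.rpow_add hNpos]
      ring_nf
    have h2 : N^(1+γ-2*q) ≤ N^(1+(-(2*q))*ε) := by
      apply Real.rpow_le_rpow_of_exponent_le hN1
      nlinarith [hqε, hγ]
    have h3 : N^(1+(-(2*q))*ε) = N * (N^(-(2*q)))^ε := by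
      rw [Real.rpow_add hNpos, Real.rpow_one, Real.rpow_mul (le_of_lt hNpos)]
    have h4 : (N^(-(2*q)))^ε ≤ (κ/2)^ε :=
      Real.rpow_le_rpow (by positivity) hν (le_of_lt hε0)
    have h5 : (0:ℝ) < N^(1+γ) := Real.rpow_pos_of_pos hNpos _
    calc 2*N*N^(-(2*q))*N^(1+γ) = 2*N*(N^(1+γ-2*q)) := by rw [mul_assoc, h1]
      _ ≤ 2*N*(N^(1+(-(2*q))*ε)) := mul_le_mul_of_nonneg_left h2 (by positivity)
      _ = 2*N*(N*(N^(-(2*q)))^ε) := by rw [h3]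
      _ ≤ 2*N*(N*(κ/2)^ε) := mul_le_mul_of_nonneg_left
            (mul_le_mul_of_nonneg_left h4 (le_of_lt hNpos)) (by positivity)
      _ = 2*((κ/2)^ε)*N^2 := by rw [pow_two]; ring
  -- assemble
  have hQsplit := Finset.sum_filter_add_sum_filter_not W
    (fun i => g i < 2*N*N^(-(2*q)*(1/2:ℝ)^K)) (fun i => g i^2)
  have hfinal : ∑ i ∈ W, g i ^2
      ≤ 2*((κ/2)^ε)*N^2 + 16*N^2*((κ/2)^ε) + 8*(κ^ε)*N^2 := by
    rw [← hQsplit]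
    have hA1 := hMain K
    have hA2 := htopset.trans htopnum
    linarith [hA1, hA2, hbandsum, htail2]
  have hhN : ((κ/2)^ε)*N^2 ≤ (κ^ε)*N^2 := mul_le_mul_of_nonneg_right hhalf hN2
  linarith [hfinal, hhN, mul_nonneg hκε hN2]
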